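/- Let α ∈ ℝ and let φ be a non-negative locally integrable function satisfying: there are constants C₁,C₂,C₃,C₄>0 with C₁ ≤ φ(s)/s^{2α} ≤ C₂ for all s ≥ 1 and C₃ ≤ φ(s)/s^{2α+1} ≤ C₄ for all 0<s<1. Then there exist constants c,C>0 (depending only on C₁,C₂,C₃,C₄) such that for every non-negative measurable function h on (0,∞) and every x>0, c·(Ch)(x) ≤ (H_{α,φ}h)(x) ≤ C·(Ch)(x), where C is the Calderón (Hardy–Littlewood–Pólya) operator (Ch)(x) = (1/x)·∫₀ˣ h(t)dt + ∫ₓ^∞ (h(t)/t)dt. -/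

import Mathlib

open MeasureTheory Set
open scoped ENNReal

/-- The Dunkl–Hausdorff operator acting on `ℝ≥0∞`-valued functions. -/
noncomputable def dhL (α : ℝ) (φ : ℝ → ℝ) (f : ℝ → ℝ≥0∞) (x : ℝ) : ℝ≥0∞ :=
  ∫⁻ t in Ioi (0:ℝ), ENNReal.ofReal (φ t / t ^ (2*α+2)) * f (x/t)

/-- The Calderón (Hardy–Littlewood–Pólya) operator. -/
noncomputable def calderonL (h : ℝ → ℝ≥0∞) (x : ℝ) : ℝ≥0∞ :=
  ENNReal.ofReal (1/x) * (∫⁻ t in Ioo (0:ℝ) x, h t) + ∫⁻ t in Ioi x, h t / ENNReal.ofReal t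

lemma key_subst (x : ℝ) (hx : 0 < x) {s : Set ℝ} (hs : MeasurableSet s)
    (hs0 : s ⊆ Ioi 0) (g : ℝ → ℝ≥0∞) :
    ∫⁻ u in (fun t => x / t) '' s, g u
      = ∫⁻ t in s, ENNReal.ofReal (x / t ^ 2) * g (x / t) := by
  have hderiv : ∀ t ∈ s, HasDerivWithinAt (fun t => x / t) (-(x / t ^ 2)) s t := by
    intro t ht
    have ht0 : (0:ℝ) < t := hs0 ht
    have h1 : HasDerivAt (fun t : ℝ => x / t) (x * -(t ^ 2)⁻¹) t := by
      simpa only [div_eq_mul_inv] using (hasDerivAt_inv ht0.ne').const_mul x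
    have : x * -(t ^ 2)⁻¹ = -(x / t ^ 2) := by field_simp
    exact (this ▸ h1).hasDerivWithinAt
  have hinj : InjOn (fun t => x / t) s := by
    intro a ha b hb hab
    have ha0 : (0:ℝ) < a := hs0 ha
    have hb0 : (0:ℝ) < b := hs0 hb
    simp only [div_eq_div_iff ha0.ne' hb0.ne'] at hab
    exact (mul_left_cancel₀ hx.ne' hab).symm
  have := lintegral_image_eq_lintegral_abs_det_fderiv_mul volume hs
    (f' := fun t => (1 : ℝ →L[ℝ] ℝ).smulRight (-(x / t ^ 2)))
    (fun t ht => (hderiv t ht).hasFDerivWithinAt) hinj g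
  simp only [ContinuousLinearMap.det_smulRight, ContinuousLinearMap.one_apply, one_mul] at this
  rw [this]
  refine setLIntegral_congr_fun hs ?_
  intro t ht
  beta_reduce

  have ht0 : (0:ℝ) < t := hs0 ht
  rw [abs_neg, abs_of_pos (by positivity)]
lemma image_div_Ioi_one (x : ℝ) (hx : 0 < x) : (fun t => x / t) '' Ioi 1 = Ioo 0 x := by
  ext u
  constructor
  · rintro ⟨t, ht, rfl⟩
    have ht1 : (1:ℝ) < t := ht
    have ht0 : (0:ℝ) < t := lt_trans one_pos ht1
    exact ⟨by positivity, (div_lt_iff₀ ht0).mpr (by nlinarith)⟩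
  · rintro ⟨hu0, hux⟩
    exact ⟨x / u, (one_lt_div hu0).mpr hux, by field_simp⟩

lemma image_div_Ioo_zero_one (x : ℝ) (hx : 0 < x) : (fun t => x / t) '' Ioo 0 1 = Ioi x := by
  ext u
  constructor
  · rintro ⟨t, ⟨ht0, ht1⟩, rfl⟩
    exact (lt_div_iff₀ ht0).mpr (by nlinarith)
  · intro hu
    have hu0 : 0 < u := hx.trans hu
    exact ⟨x / u, ⟨by positivity, (div_lt_one hu0).mpr hu⟩, by field_simp⟩

lemma E2 (x : ℝ) (hx : 0 < x) (h : ℝ → ℝ≥0∞) :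
    ∫⁻ t in Ioi (1:ℝ), ENNReal.ofReal (1 / t ^ 2) * h (x / t)
      = ENNReal.ofReal (1 / x) * ∫⁻ u in Ioo (0:ℝ) x, h u := by
  rw [← image_div_Ioi_one x hx,
    key_subst x hx measurableSet_Ioi (fun t ht => show (0:ℝ) < t from lt_trans one_pos ht) h,
    ← lintegral_const_mul' _ _ ENNReal.ofReal_ne_top]
  refine setLIntegral_congr_fun measurableSet_Ioi ?_
  intro t ht
  beta_reduce
  have ht0 : (0:ℝ) < t := lt_trans one_pos ht
  rw [← mul_assoc, ← ENNReal.ofReal_mul (by positivity)]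
  congr 2
  field_simp

lemma E1 (x : ℝ) (hx : 0 < x) (h : ℝ → ℝ≥0∞) :
    ∫⁻ t in Ioo (0:ℝ) 1, ENNReal.ofReal (1 / t) * h (x / t)
      = ∫⁻ u in Ioi x, h u / ENNReal.ofReal u := by
  rw [← image_div_Ioo_zero_one x hx,
    key_subst x hx measurableSet_Ioo (fun t ht => ht.1) _]
  refine setLIntegral_congr_fun measurableSet_Ioo ?_
  intro t ht
  have ht0 : (0:ℝ) < t := ht.1
  have hxt : (0:ℝ) < x / t := by positivity
  have hdiv : ENNReal.ofReal (x / t ^ 2) / ENNReal.ofReal (x / t)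
      = ENNReal.ofReal (1 / t) := by
    rw [← ENNReal.ofReal_div_of_pos hxt]
    congr 1
    field_simp
  calc ENNReal.ofReal (1 / t) * h (x / t)
      = (ENNReal.ofReal (x / t ^ 2) / ENNReal.ofReal (x / t)) * h (x / t) := by rw [hdiv]
    _ = ENNReal.ofReal (x / t ^ 2) * (h (x / t) / ENNReal.ofReal (x / t)) := by
        rw [div_eq_mul_inv, ENNReal.div_eq_inv_mul]; ring

lemma split_int (F : ℝ → ℝ≥0∞) :
    ∫⁻ t in Ioi (0:ℝ), F t = (∫⁻ t in Ioo (0:ℝ) 1, F t) + ∫⁻ t in Ioi (1:ℝ), F t := by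
  have hae : (Ioi (0:ℝ) : Set ℝ) =ᵐ[volume] (Ioo (0:ℝ) 1 ∪ Ioi 1 : Set ℝ) := by
    rw [← Ioo_union_Ici_eq_Ioi one_pos]
    exact Filter.EventuallyEq.union (Filter.EventuallyEq.refl _ _) Ioi_ae_eq_Ici.symm
  have hdisj : Disjoint (Ioo (0:ℝ) 1) (Ioi 1) :=
    Set.disjoint_left.mpr fun a ha hb => absurd (show (1:ℝ) < a from hb) (not_lt.mpr ha.2.le)
  rw [setLIntegral_congr hae, lintegral_union measurableSet_Ioi hdisj]

theorem dunklH_equiv_calderon (α C₁ C₂ C₃ C₄ : ℝ)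
    (hC₁ : 0 < C₁) (hC₂ : 0 < C₂) (hC₃ : 0 < C₃) (hC₄ : 0 < C₄) :
    ∃ c C : ℝ, 0 < c ∧ 0 < C ∧
      ∀ φ : ℝ → ℝ, (∀ s, 0 ≤ φ s) → LocallyIntegrableOn φ (Ioi 0) →
        (∀ s : ℝ, 1 ≤ s → C₁ ≤ φ s / s ^ (2*α) ∧ φ s / s ^ (2*α) ≤ C₂) →
        (∀ s : ℝ, 0 < s → s < 1 → C₃ ≤ φ s / s ^ (2*α+1) ∧ φ s / s ^ (2*α+1) ≤ C₄) →
        ∀ h : ℝ → ℝ≥0∞, Measurable h → ∀ x : ℝ, 0 < x →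
          ENNReal.ofReal c * calderonL h x ≤ dhL α φ h x ∧
          dhL α φ h x ≤ ENNReal.ofReal C * calderonL h x := by
  refine ⟨min C₁ C₃, max C₂ C₄, lt_min hC₁ hC₃, lt_of_lt_of_le hC₂ (le_max_left _ _),
    fun φ hφ0 _ Hge Hlt h hmeas x hx => ?_⟩
  set A : ℝ≥0∞ := ENNReal.ofReal (1/x) * (∫⁻ t in Ioo (0:ℝ) x, h t) with hA
  set B : ℝ≥0∞ := ∫⁻ t in Ioi x, h t / ENNReal.ofReal t with hB
  set F : ℝ → ℝ≥0∞ := fun t => ENNReal.ofReal (φ t / t ^ (2*α+2)) * h (x/t) with hF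
  have hsplit : dhL α φ h x = (∫⁻ t in Ioo (0:ℝ) 1, F t) + ∫⁻ t in Ioi (1:ℝ), F t :=
    split_int F
  have hb1 : ∀ t ∈ Ioo (0:ℝ) 1,
      ENNReal.ofReal (C₃ * (1/t)) ≤ ENNReal.ofReal (φ t / t ^ (2*α+2)) ∧
      ENNReal.ofReal (φ t / t ^ (2*α+2)) ≤ ENNReal.ofReal (C₄ * (1/t)) := by
    rintro t ⟨ht0, ht1⟩
    have heq : φ t / t ^ (2*α+2) = (φ t / t ^ (2*α+1)) * (1/t) := by
      rw [show (2*α+2) = (2*α+1)+1 by ring, Real.rpow_add ht0, Real.rpow_one]; ring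
    obtain ⟨hl, hu⟩ := Hlt t ht0 ht1
    constructor <;> apply ENNReal.ofReal_le_ofReal <;> rw [heq]
    · exact mul_le_mul_of_nonneg_right hl (by positivity)
    · exact mul_le_mul_of_nonneg_right hu (by positivity)
  have hb2 : ∀ t ∈ Ioi (1:ℝ),
      ENNReal.ofReal (C₁ * (1/t^2)) ≤ ENNReal.ofReal (φ t / t ^ (2*α+2)) ∧
      ENNReal.ofReal (φ t / t ^ (2*α+2)) ≤ ENNReal.ofReal (C₂ * (1/t^2)) := by
    intro t ht
    have ht1 : (1:ℝ) < t := ht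
    have ht0 : (0:ℝ) < t := lt_trans one_pos ht1
    have heq : φ t / t ^ (2*α+2) = (φ t / t ^ (2*α)) * (1/t^2) := by
      rw [Real.rpow_add ht0, Real.rpow_two]; ring
    obtain ⟨hl, hu⟩ := Hge t ht1.le
    constructor <;> apply ENNReal.ofReal_le_ofReal <;> rw [heq]
    · exact mul_le_mul_of_nonneg_right hl (by positivity)
    · exact mul_le_mul_of_nonneg_right hu (by positivity)
  have hupI₁ : (∫⁻ t in Ioo (0:ℝ) 1, F t) ≤ ENNReal.ofReal C₄ * B := by
    calc (∫⁻ t in Ioo (0:ℝ) 1, F t)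
        ≤ ∫⁻ t in Ioo (0:ℝ) 1, ENNReal.ofReal C₄ * (ENNReal.ofReal (1/t) * h (x/t)) := by
          refine setLIntegral_mono' measurableSet_Ioo fun t ht => ?_
          rw [← mul_assoc, ← ENNReal.ofReal_mul hC₄.le]
          exact mul_le_mul_left (hb1 t ht).2 _
      _ = ENNReal.ofReal C₄ * ∫⁻ t in Ioo (0:ℝ) 1, ENNReal.ofReal (1/t) * h (x/t) :=
          lintegral_const_mul' _ _ ENNReal.ofReal_ne_top
      _ = ENNReal.ofReal C₄ * B := by rw [E1 x hx h]
  have hloI₁ : ENNReal.ofReal C₃ * B ≤ ∫⁻ t in Ioo (0:ℝ) 1, F t := by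
    calc ENNReal.ofReal C₃ * B
        = ENNReal.ofReal C₃ * ∫⁻ t in Ioo (0:ℝ) 1, ENNReal.ofReal (1/t) * h (x/t) := by
          rw [E1 x hx h]
      _ = ∫⁻ t in Ioo (0:ℝ) 1, ENNReal.ofReal C₃ * (ENNReal.ofReal (1/t) * h (x/t)) :=
          (lintegral_const_mul' _ _ ENNReal.ofReal_ne_top).symm
      _ ≤ ∫⁻ t in Ioo (0:ℝ) 1, F t := by
          refine setLIntegral_mono' measurableSet_Ioo fun t ht => ?_
          rw [← mul_assoc, ← ENNReal.ofReal_mul hC₃.le]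
          exact mul_le_mul_left (hb1 t ht).1 _
  have hupI₂ : (∫⁻ t in Ioi (1:ℝ), F t) ≤ ENNReal.ofReal C₂ * A := by
    calc (∫⁻ t in Ioi (1:ℝ), F t)
        ≤ ∫⁻ t in Ioi (1:ℝ), ENNReal.ofReal C₂ * (ENNReal.ofReal (1/t^2) * h (x/t)) := by
          refine setLIntegral_mono' measurableSet_Ioi fun t ht => ?_
          rw [← mul_assoc, ← ENNReal.ofReal_mul hC₂.le]
          exact mul_le_mul_left (hb2 t ht).2 _
      _ = ENNReal.ofReal C₂ * ∫⁻ t in Ioi (1:ℝ), ENNReal.ofReal (1/t^2) * h (x/t) :=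
          lintegral_const_mul' _ _ ENNReal.ofReal_ne_top
      _ = ENNReal.ofReal C₂ * A := by rw [E2 x hx h]
  have hloI₂ : ENNReal.ofReal C₁ * A ≤ ∫⁻ t in Ioi (1:ℝ), F t := by
    calc ENNReal.ofReal C₁ * A
        = ENNReal.ofReal C₁ * ∫⁻ t in Ioi (1:ℝ), ENNReal.ofReal (1/t^2) * h (x/t) := by
          rw [E2 x hx h]
      _ = ∫⁻ t in Ioi (1:ℝ), ENNReal.ofReal C₁ * (ENNReal.ofReal (1/t^2) * h (x/t)) :=
          (lintegral_const_mul' _ _ ENNReal.ofReal_ne_top).symm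
      _ ≤ ∫⁻ t in Ioi (1:ℝ), F t := by
          refine setLIntegral_mono' measurableSet_Ioi fun t ht => ?_
          rw [← mul_assoc, ← ENNReal.ofReal_mul hC₁.le]
          exact mul_le_mul_left (hb2 t ht).1 _
  have hcal : calderonL h x = A + B := rfl
  constructor
  · calc ENNReal.ofReal (min C₁ C₃) * calderonL h x
        = ENNReal.ofReal (min C₁ C₃) * A + ENNReal.ofReal (min C₁ C₃) * B := by
          rw [hcal, mul_add]
      _ ≤ ENNReal.ofReal C₁ * A + ENNReal.ofReal C₃ * B :=
          add_le_add (mul_le_mul_left (ENNReal.ofReal_le_ofReal (min_le_left _ _)) _)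
            (mul_le_mul_left (ENNReal.ofReal_le_ofReal (min_le_right _ _)) _)
      _ ≤ (∫⁻ t in Ioi (1:ℝ), F t) + ∫⁻ t in Ioo (0:ℝ) 1, F t := add_le_add hloI₂ hloI₁
      _ = dhL α φ h x := by rw [hsplit, add_comm]
  · calc dhL α φ h x
        = (∫⁻ t in Ioo (0:ℝ) 1, F t) + ∫⁻ t in Ioi (1:ℝ), F t := hsplit
      _ ≤ ENNReal.ofReal C₄ * B + ENNReal.ofReal C₂ * A := add_le_add hupI₁ hupI₂
      _ ≤ ENNReal.ofReal (max C₂ C₄) * B + ENNReal.ofReal (max C₂ C₄) * A :=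
          add_le_add (mul_le_mul_left (ENNReal.ofReal_le_ofReal (le_max_right _ _)) _)
            (mul_le_mul_left (ENNReal.ofReal_le_ofReal (le_max_left _ _)) _)
      _ = ENNReal.ofReal (max C₂ C₄) * calderonL h x := by rw [hcal, mul_add, add_comm]
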